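/- Under Assumption (A), for every continuous $f : \mathbb{T} \to \mathbb{R}$, $\limsup_{M \to \infty} \limsup_{N \to \infty} \frac{N}{a_N^2} \log P\big(|\theta^N_0(f)| > M\big) = -\infty$; that is, for every $R > 0$ there exists $M_0$ such that for all $M \geq M_0$, $\limsup_{N \to \infty} \frac{N}{a_N^2} \log P(|\theta^N_0(f)| > M) \leq -R$. -/

import Mathlib

open MeasureTheory ProbabilityTheory Filter

lemma exp_le_one_add_add_sq {y : ℝ} (h : |y| ≤ 1) : Real.exp y ≤ 1 + y + y ^ 2 := by
  have h2 := Real.exp_bound h (n := 2) (by norm_num)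
  have hsum : ∑ m ∈ Finset.range 2, y ^ m / (m.factorial : ℝ) = 1 + y := by
    simp [Finset.sum_range_succ]
  rw [hsum] at h2
  norm_num at h2
  have h3 := (abs_sub_le_iff.1 h2).1
  nlinarith [sq_abs y]

lemma chernoff_upper {Ω : Type*} [MeasurableSpace Ω] (P : Measure Ω) [IsProbabilityMeasure P]
    {N : ℕ} (Y : Fin N → Ω → ℝ) (hY : ∀ x, Measurable (Y x))
    (hind : iIndepFun Y P)
    (C : ℝ) (hC : 0 ≤ C) (hbound : ∀ x ω, |Y x ω| ≤ C)
    (hmean : ∀ x, ∫ ω, Y x ω ∂P = 0)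
    (t : ℝ) (ht : 0 ≤ t) (htC : t * C ≤ 1) (ε : ℝ) :
    P {ω | ε ≤ ∑ x, Y x ω} ≤ ENNReal.ofReal (Real.exp (-t * ε + N * (t ^ 2 * C ^ 2))) := by
  have h_int : ∀ x, Integrable (fun ω => Real.exp (t * Y x ω)) P := by
    intro x
    refine (integrable_const (Real.exp (t * C))).mono'
      (((hY x).const_mul t).exp.aestronglyMeasurable) (ae_of_all _ fun ω => ?_)
    rw [Real.norm_eq_abs, abs_of_pos (Real.exp_pos _), Real.exp_le_exp]
    exact mul_le_mul_of_nonneg_left ((le_abs_self _).trans (hbound x ω)) ht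
  have hiY : ∀ x, Integrable (Y x) P := by
    intro x
    refine (integrable_const C).mono' (hY x).aestronglyMeasurable (ae_of_all _ fun ω => ?_)
    exact hbound x ω
  have hmgf : ∀ x, mgf (Y x) P t ≤ Real.exp (t ^ 2 * C ^ 2) := by
    intro x
    have hpt : ∀ ω, Real.exp (t * Y x ω) ≤ (1 + t ^ 2 * C ^ 2) + t * Y x ω := by
      intro ω
      have h1 : |t * Y x ω| ≤ 1 := by
        rw [abs_mul, abs_of_nonneg ht]
        exact (mul_le_mul_of_nonneg_left (hbound x ω) ht).trans htC
      have h2 := exp_le_one_add_add_sq h1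
      have h3 : (t * Y x ω) ^ 2 ≤ t ^ 2 * C ^ 2 := by
        rw [mul_pow]
        have : (Y x ω) ^ 2 ≤ C ^ 2 := by nlinarith [hbound x ω, abs_nonneg (Y x ω), neg_abs_le (Y x ω), le_abs_self (Y x ω)]
        nlinarith [sq_nonneg t]
      linarith
    have hint2 : Integrable (fun ω => (1 + t ^ 2 * C ^ 2) + t * Y x ω) P :=
      (integrable_const _).add ((hiY x).const_mul t)
    calc mgf (Y x) P t = ∫ ω, Real.exp (t * Y x ω) ∂P := rfl
      _ ≤ ∫ ω, ((1 + t ^ 2 * C ^ 2) + t * Y x ω) ∂P := integral_mono (h_int x) hint2 hpt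
      _ = (1 + t ^ 2 * C ^ 2) + t * ∫ ω, Y x ω ∂P := by
          rw [integral_add (integrable_const _) ((hiY x).const_mul t), integral_const,
            integral_const_mul]
          simp
      _ = 1 + t ^ 2 * C ^ 2 := by rw [hmean x]; ring
      _ ≤ Real.exp (t ^ 2 * C ^ 2) := by
          have := Real.add_one_le_exp (t ^ 2 * C ^ 2); linarith
  have hSint : Integrable (fun ω => Real.exp (t * (∑ x : Fin N, Y x) ω)) P :=
    hind.integrable_exp_mul_sum hY (fun i _ => h_int i)
  have hch := measure_ge_le_exp_mul_mgf (X := ∑ x : Fin N, Y x) (μ := P) ε ht hSint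
  have hmgfS : mgf (∑ x : Fin N, Y x) P t ≤ Real.exp (N * (t ^ 2 * C ^ 2)) := by
    rw [hind.mgf_sum hY]
    calc ∏ x : Fin N, mgf (Y x) P t ≤ ∏ _x : Fin N, Real.exp (t ^ 2 * C ^ 2) :=
          Finset.prod_le_prod (fun _ _ => mgf_nonneg) (fun i _ => hmgf i)
      _ = Real.exp (N * (t ^ 2 * C ^ 2)) := by
          rw [Finset.prod_const, Finset.card_univ, Fintype.card_fin, ← Real.exp_nat_mul]
  have hset : {ω | ε ≤ ∑ x, Y x ω} = {ω | ε ≤ (∑ x : Fin N, Y x) ω} := by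
    simp [Finset.sum_apply]
  rw [hset, ← ENNReal.ofReal_toReal (measure_ne_top P _)]
  refine ENNReal.ofReal_le_ofReal ?_
  calc (P {ω | ε ≤ (∑ x : Fin N, Y x) ω}).toReal ≤ Real.exp (-t * ε) * mgf (∑ x : Fin N, Y x) P t := hch
    _ ≤ Real.exp (-t * ε) * Real.exp (N * (t ^ 2 * C ^ 2)) := by
        exact mul_le_mul_of_nonneg_left hmgfS (Real.exp_pos _).le
    _ = Real.exp (-t * ε + N * (t ^ 2 * C ^ 2)) := (Real.exp_add _ _).symm

lemma integral_eta {Ω : Type*} [MeasurableSpace Ω] (P : Measure Ω) [IsProbabilityMeasure P]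
    (Z : Ω → ℝ) (hZ : Measurable Z) (hv : ∀ ω, Z ω = 0 ∨ Z ω = 1) {p : ℝ} (hp : 0 ≤ p)
    (hm : P {ω | Z ω = 1} = ENNReal.ofReal p) : ∫ ω, Z ω ∂P = p := by
  have hs : MeasurableSet {ω | Z ω = 1} := hZ (measurableSet_singleton 1)
  have hZeq : Z = Set.indicator {ω | Z ω = 1} (fun _ => (1:ℝ)) := by
    funext ω
    rcases hv ω with h | h <;> simp [Set.indicator_apply, Set.mem_setOf_eq, h]
  rw [hZeq, integral_indicator_const (1:ℝ) hs, measureReal_def, hm, smul_eq_mul, mul_one,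
    ENNReal.toReal_ofReal hp]

/-- under Assumption (A), for every continuous (`1`-periodic) `f`, the scaled
initial density field `θ₀^N(f)` is exponentially negligible at infinity:
for every `R > 0` there is `M₀` such that for all `M ≥ M₀`,
`limsup_N (N/a_N²) log P(|θ₀^N(f)| > M) ≤ -R`. -/
theorem initial_field_exponential_tightness
    {Ω : Type*} [MeasurableSpace Ω] (P : Measure Ω) [IsProbabilityMeasure P]
    (a : ℕ → ℝ) (ha : ∀ N, 0 < a N)
    (ha1 : Tendsto (fun N : ℕ => a N / (N : ℝ)) atTop (nhds 0))
    (ha2 : Tendsto (fun N : ℕ => Real.sqrt N / a N) atTop (nhds 0))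
    (φ : ℝ → ℝ) (hφc : Continuous φ) (hφp : Function.Periodic φ 1)
    (hφ : ∀ u, φ u ∈ Set.Ioo (0 : ℝ) 1)
    (η : (N : ℕ) → Fin N → Ω → ℝ)
    (hmeas : ∀ N x, Measurable (η N x))
    (hval : ∀ N x ω, η N x ω = 0 ∨ η N x ω = 1)
    (hind : ∀ N, iIndepFun (η N) P)
    (hmarg : ∀ N (x : Fin N), P {ω | η N x ω = 1} = ENNReal.ofReal (φ (x / N)))
    (f : ℝ → ℝ) (hfc : Continuous f) (hfp : Function.Periodic f 1) :
    ∀ R > (0 : ℝ), ∃ M₀ : ℝ, ∀ M ≥ M₀,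
      Filter.limsup (fun N : ℕ =>
          (((N : ℝ) / (a N) ^ 2 : ℝ) : EReal)
            * ENNReal.log (P {ω |
                M < |(1 / a N) * ∑ x : Fin N, (η N x ω - φ (x / N)) * f (x / N)|}))
        atTop ≤ ((-R : ℝ) : EReal) := by
  obtain ⟨B, hB⟩ := isCompact_Icc.exists_bound_of_continuousOn (f := f) hfc.continuousOn
  set C := max B 1 with hCdef
  have hC1 : (1:ℝ) ≤ C := le_max_right _ _
  have hC0 : (0:ℝ) < C := lt_of_lt_of_le one_pos hC1
  have hfb : ∀ u ∈ Set.Icc (0:ℝ) 1, |f u| ≤ C := fun u hu => (hB u hu).trans (le_max_left _ _)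
  intro R hR
  refine ⟨R + C^2 + 1, fun M hM => ?_⟩
  have hNa : Tendsto (fun N : ℕ => (N:ℝ) / (a N)^2) atTop (nhds 0) := by
    have h := ha2.mul ha2
    rw [mul_zero] at h
    refine h.congr fun N => ?_
    rw [div_mul_div_comm, Real.mul_self_sqrt (Nat.cast_nonneg N), sq]
  have hev1 : ∀ᶠ N : ℕ in atTop, a N / N * C ≤ 1 := by
    filter_upwards [ha1.eventually_lt_const (show (0:ℝ) < C⁻¹ by positivity)] with N hN
    calc a N / N * C ≤ C⁻¹ * C := mul_le_mul_of_nonneg_right hN.le hC0.le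
      _ = 1 := inv_mul_cancel₀ hC0.ne'
  have hev2 : ∀ᶠ N : ℕ in atTop, (N:ℝ) / (a N)^2 * Real.log 2 ≤ 1 := by
    filter_upwards [hNa.eventually_lt_const one_pos] with N hN
    have hnn : 0 ≤ (N:ℝ)/(a N)^2 := by positivity
    have hlog2 : Real.log 2 ≤ 1 := by
      have := Real.log_le_sub_one_of_pos (by norm_num : (0:ℝ) < 2); linarith
    have hlognn : 0 ≤ Real.log 2 := Real.log_nonneg (by norm_num)
    nlinarith
  refine Filter.limsup_le_of_le (by isBoundedDefault) ?_
  filter_upwards [hev1, hev2, eventually_ge_atTop 1] with N h1 h2 hN1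
  have hN0 : (0:ℝ) < N := by exact_mod_cast hN1
  have haN := ha N
  set t := a N / N with htdef
  have ht0 : 0 < t := div_pos haN hN0
  have hx01 : ∀ x : Fin N, ((x:ℕ):ℝ)/(N:ℝ) ∈ Set.Icc (0:ℝ) 1 := by
    intro x
    constructor
    · positivity
    · rw [div_le_one hN0]
      exact_mod_cast x.isLt.le
  have key : ∀ g : ℝ → ℝ, Measurable g → (∀ u ∈ Set.Icc (0:ℝ) 1, |g u| ≤ C) →
      P {ω | M * a N ≤ ∑ x : Fin N, (η N x ω - φ (x / N)) * g (x / N)} ≤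
        ENNReal.ofReal (Real.exp (-t * (M * a N) + N * (t^2 * C^2))) := by
    intro g hgm hg
    set Y : Fin N → Ω → ℝ := fun x ω => (η N x ω - φ (x / N)) * g (x / N) with hYdef
    have hYmeas : ∀ x, Measurable (Y x) := fun x => ((hmeas N x).sub_const _).mul_const _
    have hindY : iIndepFun Y P :=
      (hind N).comp (fun x => fun r : ℝ => (r - φ (x / N)) * g (x / N))
        (fun x => (measurable_id.sub_const _).mul_const _)
    have hYb : ∀ x ω, |Y x ω| ≤ C := by
      intro x ω
      have h1 : |η N x ω - φ (x / N)| ≤ 1 := by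
        rcases hval N x ω with h | h <;> rw [h]
        · rw [zero_sub, abs_neg, abs_of_pos (hφ _).1]
          exact (hφ _).2.le
        · rw [abs_of_nonneg (by linarith [(hφ (((x:ℕ):ℝ)/(N:ℝ))).2] : (0:ℝ) ≤ 1 - φ (x / N))]
          linarith [(hφ (((x:ℕ):ℝ)/(N:ℝ))).1]
      calc |Y x ω| = |η N x ω - φ (x / N)| * |g (x / N)| := abs_mul _ _
        _ ≤ 1 * C := mul_le_mul h1 (hg _ (hx01 x)) (abs_nonneg _) zero_le_one
        _ = C := one_mul C
    have hYmean : ∀ x, ∫ ω, Y x ω ∂P = 0 := by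
      intro x
      have hηint : ∫ ω, η N x ω ∂P = φ (x / N) :=
        integral_eta P _ (hmeas N x) (hval N x) (hφ _).1.le (hmarg N x)
      have hηI : Integrable (η N x) P := by
        refine (integrable_const (1:ℝ)).mono' (hmeas N x).aestronglyMeasurable
          (ae_of_all _ fun ω => ?_)
        rcases hval N x ω with h | h <;> rw [Real.norm_eq_abs, h] <;> norm_num
      calc ∫ ω, Y x ω ∂P = (∫ ω, (η N x ω - φ (x / N)) ∂P) * g (x / N) := by
            rw [← integral_mul_const]
        _ = 0 := by
            rw [integral_sub hηI (integrable_const _), hηint, integral_const]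
            simp
    exact chernoff_upper P Y hYmeas hindY C hC0.le hYb hYmean t ht0.le h1 (M * a N)
  have hup := key f hfc.measurable hfb
  have hdown := key (fun u => -f u) hfc.measurable.neg
    (fun u hu => by rw [abs_neg]; exact hfb u hu)
  set b := -t * (M * a N) + (N:ℝ) * (t^2 * C^2) with hbdef
  have hsub : {ω | M < |(1 / a N) * ∑ x : Fin N, (η N x ω - φ (x / N)) * f (x / N)|} ⊆
      {ω | M * a N ≤ ∑ x : Fin N, (η N x ω - φ (x / N)) * f (x / N)} ∪
      {ω | M * a N ≤ ∑ x : Fin N, (η N x ω - φ (x / N)) * (-f (x / N))} := by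
    intro ω hω
    simp only [Set.mem_setOf_eq, Set.mem_union] at hω ⊢
    have hS : M * a N < |∑ x : Fin N, (η N x ω - φ (x / N)) * f (x / N)| := by
      rw [abs_mul, abs_of_pos (show (0:ℝ) < 1 / a N by positivity)] at hω
      calc M * a N < 1 / a N * |∑ x : Fin N, (η N x ω - φ (x / N)) * f (x / N)| * a N :=
            mul_lt_mul_of_pos_right hω haN
        _ = |∑ x : Fin N, (η N x ω - φ (x / N)) * f (x / N)| := by field_simp
    have hneg : ∑ x : Fin N, (η N x ω - φ (x / N)) * (-f (x / N)) =
        -∑ x : Fin N, (η N x ω - φ (x / N)) * f (x / N) := by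
      simp [mul_neg]
    rcases lt_abs.1 hS with h | h
    · exact Or.inl h.le
    · exact Or.inr (by rw [hneg]; exact h.le)
  have hPle : P {ω | M < |(1 / a N) * ∑ x : Fin N, (η N x ω - φ (x / N)) * f (x / N)|} ≤
      ENNReal.ofReal (2 * Real.exp b) := by
    calc P {ω | M < |(1 / a N) * ∑ x : Fin N, (η N x ω - φ (x / N)) * f (x / N)|}
        ≤ P ({ω | M * a N ≤ ∑ x : Fin N, (η N x ω - φ (x / N)) * f (x / N)} ∪
            {ω | M * a N ≤ ∑ x : Fin N, (η N x ω - φ (x / N)) * (-f (x / N))}) :=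
          measure_mono hsub
      _ ≤ P {ω | M * a N ≤ ∑ x : Fin N, (η N x ω - φ (x / N)) * f (x / N)} +
            P {ω | M * a N ≤ ∑ x : Fin N, (η N x ω - φ (x / N)) * (-f (x / N))} :=
          measure_union_le _ _
      _ ≤ ENNReal.ofReal (Real.exp b) + ENNReal.ofReal (Real.exp b) := add_le_add hup hdown
      _ = ENNReal.ofReal (2 * Real.exp b) := by
          rw [← ENNReal.ofReal_add (Real.exp_pos _).le (Real.exp_pos _).le]
          ring_nf
  set c := (N:ℝ) / (a N)^2 with hcdef
  have hc0 : (0:ℝ) < c := by positivity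
  have hB0 : (0:ℝ) < 2 * Real.exp b := by positivity
  have hterm : (c : EReal) * ENNReal.log
      (P {ω | M < |(1 / a N) * ∑ x : Fin N, (η N x ω - φ (x / N)) * f (x / N)|}) ≤
      ((c * Real.log (2 * Real.exp b) : ℝ) : EReal) := by
    rcases eq_or_ne (P {ω | M < |(1 / a N) * ∑ x : Fin N, (η N x ω - φ (x / N)) * f (x / N)|}) 0
      with hP0 | hP0
    · rw [hP0, ENNReal.log_zero, EReal.coe_mul_bot_of_pos (by exact_mod_cast hc0)]
      exact bot_le
    · have hPfin := measure_ne_top P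
        {ω | M < |(1 / a N) * ∑ x : Fin N, (η N x ω - φ (x / N)) * f (x / N)|}
      have hPt : 0 < (P {ω | M < |(1 / a N) *
          ∑ x : Fin N, (η N x ω - φ (x / N)) * f (x / N)|}).toReal :=
        ENNReal.toReal_pos hP0 hPfin
      rw [ENNReal.log_pos_real' hPt, ← EReal.coe_mul, EReal.coe_le_coe_iff]
      refine mul_le_mul_of_nonneg_left ?_ hc0.le
      exact Real.log_le_log hPt (ENNReal.toReal_le_of_le_ofReal hB0.le hPle)
  have hcb : c * Real.log (2 * Real.exp b) = c * Real.log 2 + (-M + C^2) := by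
    rw [Real.log_mul (by norm_num) (Real.exp_ne_zero _), Real.log_exp, mul_add]
    congr 1
    rw [hbdef, hcdef, htdef]
    field_simp
  have hfinal : c * Real.log (2 * Real.exp b) ≤ -R := by
    rw [hcb]
    linarith
  exact hterm.trans (EReal.coe_le_coe_iff.2 hfinal)
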